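/- Let V be an (n+m)-dimensional real vector space, F a symmetric n-density on V and μ a symmetric (n+m)-density on V. Given linearly independent covectors v₁*,…,v_m* ∈ V*, choose w₁*,…,w_n* so that {v₁*,…,v_m*, w₁*,…,w_n*} is a basis of V* with dual basis v₁,…,v_m, w₁,…,w_n of V. Then the quantity F(w₁∧…∧w_n) / μ(v₁∧…∧v_m∧w₁∧…∧w_n) is independent of the choice of w₁*,…,w_n*, and hence defines a symmetric m-density F*_μ on V*. -/

import Mathlib

open ExteriorAlgebra Module

lemma alt_det {R M N : Type*} [CommRing R] [AddCommGroup M] [Module R M]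
    [AddCommGroup N] [Module R N] {k : ℕ}
    (f : M [⋀^Fin k]→ₗ[R] N) (A : Matrix (Fin k) (Fin k) R) (v : Fin k → M) :
    f (fun i => ∑ j, A i j • v j) = A.det • f v := by
  classical
  have h1 : f (fun i => ∑ j, A i j • v j)
      = ∑ r : Fin k → Fin k, f (fun i => A i (r i) • v (r i)) :=
    f.toMultilinearMap.map_sum (g := fun i j => A i j • v j)
  have h2 : ∀ r : Fin k → Fin k,
      f (fun i => A i (r i) • v (r i)) = (∏ i, A i (r i)) • f (fun i => v (r i)) := by
    intro r
    exact f.toMultilinearMap.map_smul_univ (fun i => A i (r i)) (fun i => v (r i))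
  rw [h1]
  simp_rw [h2]
  rw [← Finset.sum_filter_add_sum_filter_not Finset.univ (fun r : Fin k → Fin k =>
    Function.Injective r)]
  have hz : ∑ r ∈ Finset.univ.filter (fun r : Fin k → Fin k => ¬ Function.Injective r),
      (∏ i, A i (r i)) • f (fun i => v (r i)) = 0 := by
    apply Finset.sum_eq_zero
    intro r hr
    rw [Finset.mem_filter] at hr
    have : ¬ Function.Injective (fun i => v (r i)) := by
      intro h
      obtain ⟨i, j, hij, hne⟩ := Function.not_injective_iff.1 hr.2
      exact hne (h (show v (r i) = v (r j) by rw [hij]))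
    rw [f.map_eq_zero_of_not_injective _ this, smul_zero]
  rw [hz, add_zero]
  have hb : ∑ r ∈ Finset.univ.filter (fun r : Fin k → Fin k => Function.Injective r),
      (∏ i, A i (r i)) • f (fun i => v (r i))
      = ∑ σ : Equiv.Perm (Fin k), (∏ i, A i (σ i)) • f (fun i => v (σ i)) := by
    symm
    apply Finset.sum_bij (fun (σ : Equiv.Perm (Fin k)) _ => (σ : Fin k → Fin k))
    · intro σ _
      simp [σ.injective]
    · intro σ _ τ _ h
      exact Equiv.coe_fn_injective h
    · intro r hr
      rw [Finset.mem_filter] at hr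
      have hbij : Function.Bijective r := (Finite.injective_iff_bijective).1 hr.2
      exact ⟨Equiv.ofBijective r hbij, Finset.mem_univ _, rfl⟩
    · intro σ _
      rfl
  rw [hb]
  have h3 : ∀ σ : Equiv.Perm (Fin k),
      (∏ i, A i (σ i)) • f (fun i => v (σ i))
      = ((Equiv.Perm.sign σ : R) * ∏ i, A i (σ i)) • f v := by
    intro σ
    have := f.map_perm v σ
    rw [show (fun i => v (σ i)) = v ∘ σ from rfl, this]
    rw [smul_comm]
    rw [Units.smul_def, ← Int.cast_smul_eq_zsmul R, smul_smul]
  simp_rw [h3]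
  rw [← Finset.sum_smul]
  congr 1
  rw [← Matrix.det_transpose A, Matrix.det_apply']
  congr 1

lemma iMulti_basis_ne_zero {V : Type*} [AddCommGroup V] [Module ℝ V] {N : ℕ}
    (b : Basis (Fin N) ℝ V) : ιMulti ℝ N (⇑b) ≠ 0 := by
  classical
  intro h
  have h1 := ExteriorAlgebra.liftAlternating_apply_ιMulti
    (R := ℝ) (M := V) (N := ℝ)
    (Function.update (fun i => (0 : V [⋀^Fin i]→ₗ[ℝ] ℝ)) N b.det) ⇑b
  rw [h, map_zero] at h1
  rw [Function.update_self] at h1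
  rw [b.det_self] at h1
  exact one_ne_zero h1.symm

/-- (Well-definedness of the codensity.) Let `V` be an `(n+m)`-dimensional
real vector space, `F` a symmetric `n`-density and `μ` a symmetric `(n+m)`-density on `V`.
If two bases `{v₁*,…,v_m*, w₁*,…,w_n*}` and `{v₁*,…,v_m*, w₁'*,…,w_n'*}` of `V*` (encoded by
their dual bases `B, B'` of `V`, indexed by `Fin m ⊕ Fin n`) have the same covectors
`vᵢ* = B.coord (inl i) = B'.coord (inl i)`, then
`F(w₁∧…∧w_n) / μ(v₁∧…∧v_m∧w₁∧…∧w_n)` is the same for both bases; hence it defines a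
symmetric `m`-density `F*_μ` on `V*`. -/
theorem stmt_1 {n m : ℕ} {V : Type*} [AddCommGroup V] [Module ℝ V]
    (hV : finrank ℝ V = m + n)
    (F : ExteriorAlgebra ℝ V → ℝ) (μ : ExteriorAlgebra ℝ V → ℝ)
    -- `F` is a symmetric `n`-density on `V`
    (hFnonneg : ∀ ξ ∈ ⋀[ℝ]^n V, 0 ≤ F ξ)
    (hFhom : ∀ a : ℝ, 0 ≤ a → ∀ ξ ∈ ⋀[ℝ]^n V, F (a • ξ) = a * F ξ)
    (hFzero : ∀ v : Fin n → V, (F (ιMulti ℝ n v) = 0 ↔ ιMulti ℝ n v = 0))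
    (hFsymm : ∀ ξ ∈ ⋀[ℝ]^n V, F (-ξ) = F ξ)
    -- `μ` is a symmetric `(n+m)`-density on `V`
    (hμnonneg : ∀ ξ ∈ ⋀[ℝ]^(m + n) V, 0 ≤ μ ξ)
    (hμhom : ∀ a : ℝ, 0 ≤ a → ∀ ξ ∈ ⋀[ℝ]^(m + n) V, μ (a • ξ) = a * μ ξ)
    (hμzero : ∀ v : Fin (m + n) → V, (μ (ιMulti ℝ (m + n) v) = 0 ↔ ιMulti ℝ (m + n) v = 0))
    (hμsymm : ∀ ξ ∈ ⋀[ℝ]^(m + n) V, μ (-ξ) = μ ξ)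
    -- two completions of the same covectors `v₁*, …, v_m*` to a basis of `V*`
    (B B' : Basis (Fin m ⊕ Fin n) ℝ V)
    (hBB' : ∀ i : Fin m, B.coord (Sum.inl i) = B'.coord (Sum.inl i)) :
    F (ιMulti ℝ n fun j => B (Sum.inr j)) /
        μ (ιMulti ℝ (m + n) fun k => B (finSumFinEquiv.symm k)) =
      F (ιMulti ℝ n fun j => B' (Sum.inr j)) /
        μ (ιMulti ℝ (m + n) fun k => B' (finSumFinEquiv.symm k)) := by
  classical
  set e : Fin m ⊕ Fin n ≃ Fin (m + n) := finSumFinEquiv with he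
  set C : Matrix (Fin m ⊕ Fin n) (Fin m ⊕ Fin n) ℝ := fun k l => B.repr (B' k) l with hC
  have hrepr : ∀ k, B' k = ∑ l, C k l • B l := fun k => (B.sum_repr (B' k)).symm
  have hC0 : ∀ (j : Fin n) (i : Fin m), C (Sum.inr j) (Sum.inl i) = 0 := by
    intro j i
    have h := LinearMap.congr_fun (hBB' i) (B' (Sum.inr j))
    simpa [hC, Basis.coord_apply, Basis.repr_self, Finsupp.single_apply] using h
  have hCI : ∀ i i' : Fin m, C (Sum.inl i) (Sum.inl i') = if i = i' then 1 else 0 := by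
    intro i i'
    have h := LinearMap.congr_fun (hBB' i') (B' (Sum.inl i))
    rw [Basis.coord_apply, Basis.coord_apply, Basis.repr_self] at h
    show B.repr (B' (Sum.inl i)) (Sum.inl i') = _
    rw [h, Finsupp.single_apply]
    simp [Sum.inl.injEq]
  set d : Matrix (Fin n) (Fin n) ℝ := fun j j' => C (Sum.inr j) (Sum.inr j') with hd
  -- the F-side transformation
  have hw : (fun j => B' (Sum.inr j)) = fun j => ∑ j', d j j' • B (Sum.inr j') := by
    funext j
    rw [hrepr (Sum.inr j), Fintype.sum_sum_type]
    simp [hC0, hd]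
  have hFkey : ιMulti ℝ n (fun j => B' (Sum.inr j))
      = d.det • ιMulti ℝ n (fun j => B (Sum.inr j)) := by
    rw [hw]; exact alt_det _ d _
  -- the μ-side transformation
  have hv : (fun k : Fin (m + n) => B' (e.symm k))
      = fun k => ∑ k', (C.submatrix e.symm e.symm) k k' • B (e.symm k') := by
    funext k
    rw [hrepr (e.symm k)]
    exact (Equiv.sum_comp e.symm (fun l => C (e.symm k) l • B l)).symm
  have hμkey : ιMulti ℝ (m + n) (fun k => B' (e.symm k))
      = (C.submatrix e.symm e.symm).det • ιMulti ℝ (m + n) (fun k => B (e.symm k)) := by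
    rw [hv]; exact alt_det _ _ _
  -- determinants agree
  have hCblock : C = Matrix.fromBlocks 1
      (Matrix.of fun i j' => C (Sum.inl i) (Sum.inr j')) 0 d := by
    ext k l
    cases k with
    | inl i =>
      cases l with
      | inl i' => simp [hCI i i', Matrix.one_apply]
      | inr j' => simp
    | inr j =>
      cases l with
      | inl i' => simp [hC0 j i']
      | inr j' => rw [Matrix.fromBlocks_apply₂₂]
  have hdetCd : C.det = d.det := by
    rw [hCblock, Matrix.det_fromBlocks_zero₂₁, Matrix.det_one, one_mul]
  have hdet_ne : C.det ≠ 0 := by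
    have hCt : C = Matrix.transpose (B.toMatrix ⇑B') := by
      ext k l
      simp [hC, Basis.toMatrix_apply, Matrix.transpose_apply]
    rw [hCt, Matrix.det_transpose, ← Basis.det_apply]
    exact (B.isUnit_det B').ne_zero
  have hsub : (C.submatrix ⇑e.symm ⇑e.symm).det = d.det := by
    rw [Matrix.det_submatrix_equiv_self, hdetCd]
  set c : ℝ := d.det with hcdef
  have hcne : c ≠ 0 := by rw [← hdetCd]; exact hdet_ne
  -- memberships
  have hwmem : ιMulti ℝ n (fun j => B (Sum.inr j)) ∈ ⋀[ℝ]^n V :=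
    ExteriorAlgebra.ιMulti_range ℝ n (Set.mem_range_self _)
  have hξmem : ιMulti ℝ (m + n) (fun k => B (e.symm k)) ∈ ⋀[ℝ]^(m + n) V :=
    ExteriorAlgebra.ιMulti_range ℝ (m + n) (Set.mem_range_self _)
  -- scaling behaviour
  have hsc : ∀ (G : ExteriorAlgebra ℝ V → ℝ) (k : ℕ),
      (∀ a : ℝ, 0 ≤ a → ∀ ξ ∈ ⋀[ℝ]^k V, G (a • ξ) = a * G ξ) →
      (∀ ξ ∈ ⋀[ℝ]^k V, G (-ξ) = G ξ) →
      ∀ x ∈ ⋀[ℝ]^k V, G (c • x) = |c| * G x := by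
    intro G k hhom hsymm x hx
    rcases le_or_gt 0 c with h | h
    · rw [abs_of_nonneg h]; exact hhom c h x hx
    · have hcx : c • x = -((-c) • x) := by rw [neg_smul, neg_neg]
      rw [hcx, hsymm _ (Submodule.smul_mem _ _ hx), hhom (-c) (by linarith) x hx,
        abs_of_neg h]
  have habs : |c| ≠ 0 := abs_ne_zero.2 hcne
  rw [hFkey, hμkey, hsub, hsc F n hFhom hFsymm _ hwmem, hsc μ (m + n) hμhom hμsymm _ hξmem,
    mul_div_mul_left _ _ habs]
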